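/- arXiv:2501.15249 — 2 statements merged into one kernel-verified Lean document; each statement's English description precedes it below -/
import Mathlib

section
/- Let G be a finite directed graph whose edges are labeled with functions ℤ → ℤ of the form 'subtract 1', 'add 1', or 'identity' acting on a non-negative integer counter, such that every cycle of G contains strictly more 'subtract 1' edges than 'add 1' edges. Then every walk in G along which the counter remains non-negative is finite; i.e., there is no infinite walk keeping the counter ≥ 0 at every step. -/
/-- In a finite directed graph whose edges are labeled by -1, 0, or +1,
if every cycle has strictly more `-1` edges than `+1` edges (i.e., negative
total label), then there is no infinite walk keeping a counter, updated
by the labels, non-negative at every step. -/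
theorem no_infinite_nonneg_walk (V : Type) [Fintype V]
    (E : V → V → Prop) (label : V → V → ℤ)
    (hlab : ∀ u v, E u v → label u v = -1 ∨ label u v = 0 ∨ label u v = 1)
    (hcyc : ∀ n : ℕ, 0 < n → ∀ w : ℕ → V,
      (∀ i < n, E (w i) (w (i + 1))) → w n = w 0 →
      (∑ i ∈ Finset.range n, label (w i) (w (i + 1))) < 0) :
    ¬ ∃ (w : ℕ → V) (c : ℕ → ℤ),
      (∀ n, E (w n) (w (n + 1))) ∧
      (∀ n, c (n + 1) = c n + label (w n) (w (n + 1))) ∧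
      (∀ n, 0 ≤ c n) := by
  rintro ⟨w, c, hE, hc, hpos⟩
  have key : ∀ m d : ℕ,
      c (m + d) = c m + ∑ i ∈ Finset.range d, label (w (m + i)) (w (m + i + 1)) := by
    intro m d
    induction d with
    | zero => simp
    | succ d ih =>
      rw [Finset.sum_range_succ, ← Nat.add_assoc, hc (m + d), ih]
      ring
  obtain ⟨v, hv⟩ := Finite.exists_infinite_fiber w
  rw [Set.infinite_coe_iff] at hv
  have step : ∀ n, w n = v → ∃ m, n < m ∧ w m = v ∧ c m ≤ c n - 1 := by
    intro n hn
    obtain ⟨m, hm, hnm⟩ := hv.exists_gt n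
    simp only [Set.mem_preimage, Set.mem_singleton_iff] at hm
    refine ⟨m, hnm, hm, ?_⟩
    have hd : m = n + (m - n) := by omega
    have hsum := hcyc (m - n) (by omega) (fun i => w (n + i))
      (fun i _ => hE (n + i)) (by show w (n + (m - n)) = w (n + 0); rw [← hd, hm, Nat.add_zero, hn])
    have hk := key n (m - n)
    rw [← hd] at hk
    simp only [← Nat.add_assoc] at hsum
    omega
  obtain ⟨n0, hn0⟩ := hv.nonempty
  simp only [Set.mem_preimage, Set.mem_singleton_iff] at hn0
  have iter : ∀ k : ℕ, ∃ n, w n = v ∧ c n ≤ c n0 - k := by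
    intro k
    induction k with
    | zero => exact ⟨n0, hn0, by simp⟩
    | succ k ih =>
      obtain ⟨n, hn, hcn⟩ := ih
      obtain ⟨m, _, hm, hcm⟩ := step n hn
      exact ⟨m, hm, by push_cast; omega⟩
  obtain ⟨n, _, hcn⟩ := iter ((c n0).toNat + 1)
  have h0 := hpos n
  have h1 := hpos n0
  have h2 : ((c n0).toNat : ℤ) = c n0 := Int.toNat_of_nonneg h1
  push_cast at hcn
  omega
end

section
/- Let G = (V, E) be a finite directed graph with a distinguished initial vertex v₀ and a set of goal vertices Goal, representing the state transitions of a deterministic policy (each non-goal vertex in the policy's domain has exactly one outgoing edge). Suppose (i) G is 'closed': every reachable non-goal vertex has an outgoing edge; (ii) G is 'terminating': there is no infinite path from v₀; and (iii) some goal vertex is reachable along the unique maximal path from v₀. Then the unique maximal path from v₀ is finite and ends in a goal vertex. Conversely, if the unique maximal path from every initial vertex is finite and goal-reaching, then conditions (i)–(iii) hold restricted to reachable vertices. -/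
/-- Characterization of solutions for a deterministic policy graph: with
execution steps `step u v ↔ u ∉ Goal ∧ succ u = some v` (execution stops at
goal vertices), the policy is closed, terminating and reaches a goal vertex
if and only if the unique maximal path from `v₀` is finite and ends in a goal
vertex. -/
theorem policy_solution_characterization {V : Type} [Fintype V]
    (succ : V → Option V) (v₀ : V) (Goal : Set V) :
    (let step : V → V → Prop := fun u v => u ∉ Goal ∧ succ u = some v
    -- (i) closed, (ii) terminating, (iii) a goal vertex is reachable
    ((∀ v, Relation.ReflTransGen step v₀ v → v ∉ Goal → ∃ u, succ v = some u) ∧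
     (¬ ∃ w : ℕ → V, w 0 = v₀ ∧ ∀ n, step (w n) (w (n + 1))) ∧
     (∃ v, Relation.ReflTransGen step v₀ v ∧ v ∈ Goal))
    ↔
    -- the unique maximal path from v₀ is finite and ends in a goal vertex
    ((∃ v, Relation.ReflTransGen step v₀ v ∧ v ∈ Goal) ∧
     (¬ ∃ w : ℕ → V, w 0 = v₀ ∧ ∀ n, step (w n) (w (n + 1))))) := by
  intro step
  constructor
  · rintro ⟨_, h2, h3⟩
    exact ⟨h3, h2⟩
  · rintro ⟨⟨g, hg, hgG⟩, hterm⟩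
    refine ⟨?_, hterm, g, hg, hgG⟩
    intro v hv hvG
    have hRU : Relator.RightUnique step := by
      rintro a b c ⟨_, hb⟩ ⟨_, hc⟩
      rw [hb] at hc; exact Option.some.inj hc
    rcases Relation.ReflTransGen.total_of_right_unique hRU hg hv with h | h
    · rcases h.cases_head with rfl | ⟨x, ⟨hxG, _⟩, _⟩
      · exact absurd hgG hvG
      · exact absurd hgG hxG
    · rcases h.cases_head with rfl | ⟨x, ⟨_, hx⟩, _⟩
      · exact absurd hgG hvG
      · exact ⟨x, hx⟩
end
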